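/- For every positive integer m, the polynomial h(z) = 2·∑_{k=0}^{m-1} (A_{m-1-k}/A_m)·z^k, where A_j = ∏_{i=1}^{j} (2i-1)/(2i) (with A_0 = 1), satisfies h(0) = 4m/(2m-1), h(1) = 4m, and h'(1) = (8/3)·m·(m-1). -/

import Mathlib

noncomputable def Aa (j : ℕ) : ℝ := ∏ i ∈ Finset.Icc 1 j, (2 * (i : ℝ) - 1) / (2 * i)

lemma Aa_pos (j : ℕ) : 0 < Aa j := by
  apply Finset.prod_pos
  intro i hi
  have h1 : 1 ≤ i := (Finset.mem_Icc.mp hi).1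
  have : (1 : ℝ) ≤ i := by exact_mod_cast h1
  apply div_pos <;> nlinarith

lemma Aa_succ (m : ℕ) : Aa (m + 1) = Aa m * ((2 * ((m : ℝ) + 1) - 1) / (2 * ((m : ℝ) + 1))) := by
  unfold Aa
  rw [Finset.prod_Icc_succ_top (by omega : 1 ≤ m + 1)]
  push_cast
  ring

lemma sum1 (m : ℕ) : ∑ j ∈ Finset.range m, Aa j = 2 * m * Aa m := by
  induction m with
  | zero => simp
  | succ n ih =>
    rw [Finset.sum_range_succ, ih, Aa_succ]
    have hpos : (0 : ℝ) < 2 * ((n : ℝ) + 1) := by positivity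
    field_simp
    push_cast
    ring

lemma sum2 (m : ℕ) : ∑ j ∈ Finset.range m, ((m : ℝ) - 1 - j) * Aa j
    = (4 / 3) * m * ((m : ℝ) - 1) * Aa m := by
  induction m with
  | zero => simp
  | succ n ih =>
    have step : ∑ j ∈ Finset.range (n + 1), (((n : ℝ) + 1) - 1 - j) * Aa j
        = (∑ j ∈ Finset.range n, ((n : ℝ) - 1 - j) * Aa j)
          + ∑ j ∈ Finset.range n, Aa j := by
      rw [Finset.sum_range_succ]
      rw [← Finset.sum_add_distrib]
      have : (((n : ℝ) + 1) - 1 - (n : ℝ)) * Aa n = 0 := by ring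
      rw [this, add_zero]
      apply Finset.sum_congr rfl
      intro j _
      ring
    push_cast
    rw [step, ih, sum1, Aa_succ]
    have hpos : (0 : ℝ) < 2 * ((n : ℝ) + 1) := by positivity
    field_simp
    ring

/-- values of the limiting polynomial
`h(z) = 2 ∑_{k=0}^{m-1} (A_{m-1-k}/A_m) z^k` at the edges:
`h(0) = 4m/(2m-1)`, `h(1) = 4m` and `h'(1) = (8/3)m(m-1)`. -/
theorem limit_polynomial_values (m : ℕ) (hm : 1 ≤ m)
    (A : ℕ → ℝ)
    (hA : ∀ j, A j = ∏ i ∈ Finset.Icc 1 j, (2 * (i : ℝ) - 1) / (2 * (i : ℝ)))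
    (h : ℝ → ℝ)
    (hh : ∀ z, h z = 2 * ∑ k ∈ Finset.range m, (A (m - 1 - k) / A m) * z ^ k) :
    h 0 = 4 * m / (2 * m - 1) ∧ h 1 = 4 * m ∧
      deriv h 1 = (8/3) * m * ((m : ℝ) - 1) := by
  have hAeq : A = Aa := by funext j; rw [hA j]; rfl
  subst hAeq
  have hm' : (1 : ℝ) ≤ m := by exact_mod_cast hm
  have hAm : Aa m ≠ 0 := ne_of_gt (Aa_pos m)
  have hAm1 : Aa (m - 1) ≠ 0 := ne_of_gt (Aa_pos (m - 1))
  have hms : m = (m - 1) + 1 := by omega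
  have hrel : Aa m = Aa (m - 1) * ((2 * (m : ℝ) - 1) / (2 * m)) := by
    conv_lhs => rw [hms, Aa_succ]
    have : ((m - 1 : ℕ) : ℝ) + 1 = (m : ℝ) := by
      have : (1:ℕ) ≤ m := hm
      push_cast [Nat.cast_sub hm]
      ring
    rw [this]
  have h2m1 : (2 * (m : ℝ) - 1) ≠ 0 := by nlinarith
  have h2m : (2 * (m : ℝ)) ≠ 0 := by positivity
  refine ⟨?_, ?_, ?_⟩
  · -- h 0
    rw [hh 0]
    rw [Finset.sum_eq_single 0]
    · simp only [pow_zero, Nat.sub_zero, mul_one]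
      rw [hrel]
      field_simp
      ring
    · intro k _ hk
      rw [zero_pow hk, mul_zero]
    · intro h0; exact absurd (Finset.mem_range.mpr (by omega)) h0
  · -- h 1
    rw [hh 1]
    simp only [one_pow, mul_one]
    have hre : ∑ k ∈ Finset.range m, Aa (m - 1 - k) / Aa m
        = ∑ j ∈ Finset.range m, Aa j / Aa m :=
      Finset.sum_range_reflect (fun j => Aa j / Aa m) m
    rw [hre, ← Finset.sum_div, sum1]
    field_simp
    ring
  · -- deriv
    have hfun : h = fun z : ℝ => 2 * ∑ k ∈ Finset.range m, (Aa (m - 1 - k) / Aa m) * z ^ k :=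
      funext hh
    have hd : HasDerivAt (fun z : ℝ => 2 * ∑ k ∈ Finset.range m, (Aa (m - 1 - k) / Aa m) * z ^ k)
        (2 * ∑ k ∈ Finset.range m, (Aa (m - 1 - k) / Aa m) * ((k : ℝ) * (1 : ℝ) ^ (k - 1))) 1 := by
      apply HasDerivAt.const_mul
      exact HasDerivAt.fun_sum fun k _ => (hasDerivAt_pow k (1 : ℝ)).const_mul _
    rw [hfun, hd.deriv]
    have hsimp : ∑ k ∈ Finset.range m, (Aa (m - 1 - k) / Aa m) * ((k : ℝ) * (1 : ℝ) ^ (k - 1))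
        = ∑ k ∈ Finset.range m, ((k : ℝ) * Aa (m - 1 - k)) / Aa m := by
      apply Finset.sum_congr rfl; intro k _; rw [one_pow]; ring
    rw [hsimp]
    have hre : ∑ k ∈ Finset.range m, ((k : ℝ) * Aa (m - 1 - k)) / Aa m
        = ∑ j ∈ Finset.range m, (((m - 1 - j : ℕ) : ℝ) * Aa (m - 1 - (m - 1 - j))) / Aa m :=
      (Finset.sum_range_reflect (fun k => ((k : ℝ) * Aa (m - 1 - k)) / Aa m) m).symm
    rw [hre]
    have hre2 : ∑ j ∈ Finset.range m, (((m - 1 - j : ℕ) : ℝ) * Aa (m - 1 - (m - 1 - j))) / Aa m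
        = ∑ j ∈ Finset.range m, (((m : ℝ) - 1 - j) * Aa j) / Aa m := by
      apply Finset.sum_congr rfl
      intro j hj
      have hj' : j < m := Finset.mem_range.mp hj
      have e1 : m - 1 - (m - 1 - j) = j := by omega
      have e2 : ((m - 1 - j : ℕ) : ℝ) = (m : ℝ) - 1 - j := by
        have : m - 1 - j = m - (1 + j) := by omega
        rw [this, Nat.cast_sub (by omega)]
        push_cast; ring
      rw [e1, e2]
    rw [hre2, ← Finset.sum_div, sum2]
    field_simp
    ring
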